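/- arXiv:2306.00538 — 3 statements merged into one kernel-verified Lean document; each statement's English description precedes it below -/
import Mathlib

section
/- Let Σ be a p×p positive definite real symmetric matrix, Δ ∈ ℝ^p, and let A' ⊆ A ⊆ {1,…,p} be index sets. Denote by Σ_A the principal submatrix of Σ indexed by A and Δ_A the corresponding subvector. Then Δ_{A'}ᵀ (Σ_{A'})⁻¹ Δ_{A'} ≤ Δ_Aᵀ (Σ_A)⁻¹ Δ_A. -/
open Matrix Finset

section Aux
variable {m n : Type*} [Fintype m] [Fintype n] [DecidableEq n] [DecidableEq m]

lemma sum_extend_mul (e : m → n) (he : Function.Injective e) (z : m → ℝ) (f : n → ℝ) :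
    ∑ j, Function.extend e z 0 j * f j = ∑ i, z i * f (e i) := by
  have h1 : ∑ j ∈ (univ : Finset m).image e, Function.extend e z 0 j * f j
      = ∑ i, Function.extend e z 0 (e i) * f (e i) :=
    Finset.sum_image (fun a _ b _ h => he h)
  have h2 : ∑ j, Function.extend e z 0 j * f j
      = ∑ j ∈ (univ : Finset m).image e, Function.extend e z 0 j * f j := by
    refine (Finset.sum_subset (Finset.subset_univ _) ?_).symm
    intro j _ hj
    have : Function.extend e z 0 j = 0 := by
      rw [Function.extend_apply']
      · rfl
      · rintro ⟨i, rfl⟩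
        exact hj (Finset.mem_image.2 ⟨i, Finset.mem_univ _, rfl⟩)
    simp [this]
  rw [h2, h1]
  simp [he.extend_apply]

lemma extended_quadform (M : Matrix n n ℝ) (e : m → n) (he : Function.Injective e)
    (z : m → ℝ) :
    Function.extend e z 0 ⬝ᵥ (M *ᵥ Function.extend e z 0)
      = z ⬝ᵥ (M.submatrix e e *ᵥ z) := by
  rw [dotProduct, sum_extend_mul e he]
  congr 1; ext i
  rw [mulVec, dotProduct, mulVec, dotProduct]
  congr 1
  calc ∑ k, M (e i) k * Function.extend e z 0 k
      = ∑ k, Function.extend e z 0 k * M (e i) k := by simp [mul_comm]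
    _ = ∑ i', z i' * M (e i) (e i') := sum_extend_mul e he z (fun k => M (e i) k)
    _ = ∑ i', M.submatrix e e i i' * z i' := by simp [mul_comm, submatrix]

lemma posdef_submatrix (M : Matrix n n ℝ) (hM : M.PosDef) (e : m → n)
    (he : Function.Injective e) : (M.submatrix e e).PosDef := by
  refine PosDef.of_dotProduct_mulVec_pos (hM.isHermitian.submatrix e) fun z hz => ?_
  have h := hM.dotProduct_mulVec_pos (x := Function.extend e z 0) ?_
  · simpa [star_trivial, extended_quadform M e he z] using h
  · intro h0
    apply hz
    ext i
    have := congrFun h0 (e i)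
    simpa [he.extend_apply] using this

lemma quad_le (M : Matrix n n ℝ) (hM : M.PosDef) (x y : n → ℝ) :
    2 * (y ⬝ᵥ x) - y ⬝ᵥ (M *ᵥ y) ≤ x ⬝ᵥ (M⁻¹ *ᵥ x) := by
  have hdet : IsUnit M.det := isUnit_iff_ne_zero.2 hM.det_pos.ne'
  have hinv : M *ᵥ (M⁻¹ *ᵥ x) = x := by
    rw [mulVec_mulVec, mul_nonsing_inv _ hdet, one_mulVec]
  have hsym : ∀ u v : n → ℝ, u ⬝ᵥ (M *ᵥ v) = v ⬝ᵥ (M *ᵥ u) := by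
    intro u v
    simp only [dotProduct, mulVec, dotProduct, Finset.mul_sum]
    rw [Finset.sum_comm]
    refine Finset.sum_congr rfl fun k _ => Finset.sum_congr rfl fun j _ => ?_
    have hjk : M j k = M k j := by
      have := hM.isHermitian.apply k j
      simpa using this
    rw [hjk]; ring
  set w := y - M⁻¹ *ᵥ x with hw
  have h0 : 0 ≤ w ⬝ᵥ (M *ᵥ w) := by
    simpa [star_trivial] using hM.posSemidef.dotProduct_mulVec_nonneg w
  have e1 : (M⁻¹ *ᵥ x) ⬝ᵥ (M *ᵥ y) = y ⬝ᵥ x := by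
    rw [hsym, hinv]
  have e2 : y ⬝ᵥ (M *ᵥ (M⁻¹ *ᵥ x)) = y ⬝ᵥ x := by rw [hinv]
  have e3 : (M⁻¹ *ᵥ x) ⬝ᵥ (M *ᵥ (M⁻¹ *ᵥ x)) = x ⬝ᵥ (M⁻¹ *ᵥ x) := by
    rw [hinv, dotProduct_comm]
  have hexp : w ⬝ᵥ (M *ᵥ w)
      = y ⬝ᵥ (M *ᵥ y) - 2*(y ⬝ᵥ x) + x ⬝ᵥ (M⁻¹ *ᵥ x) := by
    rw [hw, mulVec_sub, sub_dotProduct, dotProduct_sub, dotProduct_sub, e1, e2, e3]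
    ring
  linarith [hexp ▸ h0]

lemma key (M : Matrix n n ℝ) (hM : M.PosDef) (x : n → ℝ) (e : m → n)
    (he : Function.Injective e) :
    (x ∘ e) ⬝ᵥ ((M.submatrix e e)⁻¹ *ᵥ (x ∘ e)) ≤ x ⬝ᵥ (M⁻¹ *ᵥ x) := by
  classical
  set N := M.submatrix e e with hN
  have hNpd : N.PosDef := posdef_submatrix M hM e he
  have hdet : IsUnit N.det := isUnit_iff_ne_zero.2 hNpd.det_pos.ne'
  set z := N⁻¹ *ᵥ (x ∘ e) with hz
  have hNz : N *ᵥ z = x ∘ e := by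
    rw [hz, mulVec_mulVec, mul_nonsing_inv _ hdet, one_mulVec]
  have lhs_eq : (x ∘ e) ⬝ᵥ (N⁻¹ *ᵥ (x ∘ e)) = 2 * (z ⬝ᵥ (x ∘ e)) - z ⬝ᵥ (N *ᵥ z) := by
    rw [hNz, ← hz, dotProduct_comm]
    ring
  rw [lhs_eq]
  have h1 : Function.extend e z 0 ⬝ᵥ x = z ⬝ᵥ (x ∘ e) := by
    rw [dotProduct, dotProduct, sum_extend_mul e he]
    rfl
  calc 2 * (z ⬝ᵥ (x ∘ e)) - z ⬝ᵥ (N *ᵥ z)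
      = 2 * (Function.extend e z 0 ⬝ᵥ x)
        - Function.extend e z 0 ⬝ᵥ (M *ᵥ Function.extend e z 0) := by
        rw [h1, extended_quadform M e he]
    _ ≤ x ⬝ᵥ (M⁻¹ *ᵥ x) := quad_le M hM x _

end Aux

theorem mahalanobis_mono_principal_submatrix (p : ℕ) (S : Matrix (Fin p) (Fin p) ℝ)
    (hS : S.PosDef) (Δ : Fin p → ℝ) (A A' : Finset (Fin p)) (hAA : A' ⊆ A) :
    (fun i : A' => Δ i) ⬝ᵥ ((S.submatrix (fun i : A' => (i : Fin p)) (fun i : A' => (i : Fin p)))⁻¹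
        *ᵥ (fun i : A' => Δ i))
    ≤ (fun i : A => Δ i) ⬝ᵥ ((S.submatrix (fun i : A => (i : Fin p)) (fun i : A => (i : Fin p)))⁻¹
        *ᵥ (fun i : A => Δ i)) := by
  classical
  set cA : A → Fin p := fun i => (i : Fin p)
  set M := S.submatrix cA cA with hM
  have hMpd : M.PosDef := posdef_submatrix S hS cA (fun a b h => Subtype.ext h)
  set e : A' → A := fun i => ⟨(i : Fin p), hAA i.2⟩ with he
  have hei : Function.Injective e := by
    intro a b h
    have h2 : ((a : Fin p)) = ((b : Fin p)) := congrArg (fun t : A => (t : Fin p)) h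
    exact Subtype.ext h2
  have hsub : S.submatrix (fun i : A' => (i : Fin p)) (fun i : A' => (i : Fin p))
      = M.submatrix e e := by
    ext i j; rfl
  have hx : (fun i : A' => Δ i) = (fun i : A => Δ i) ∘ e := rfl
  rw [hsub, hx]
  exact key M hMpd (fun i : A => Δ i) e hei
end

section
/- Cauchy interlacing for the product of inverses: let Σ_X and Σ_Y be p×p positive definite matrices, A' ⊆ A ⊆ {1,…,p} index sets with |A'| = d' ≤ |A| = d, and let γ_{A,1} ≥ … ≥ γ_{A,d} and γ_{A',1} ≥ … ≥ γ_{A',d'} be the eigenvalues of (Σ_{A,Y})⁻¹ Σ_{A,X} and (Σ_{A',Y})⁻¹ Σ_{A',X} respectively, where Σ_{A,·} denotes the principal submatrix indexed by A. Then γ_{A,i} ≥ γ_{A',i} for all 1 ≤ i ≤ d'. -/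
open Matrix Polynomial


variable {ι κ : Type*} [Fintype ι] [Fintype κ] [DecidableEq ι] [DecidableEq κ]

/-- inclusion matrix of an injection `g : κ → ι`. -/
noncomputable def inclM (g : κ → ι) : Matrix ι κ ℝ := Matrix.of fun j i => if g i = j then 1 else 0

lemma inclM_conj (g : κ → ι) (M : Matrix ι ι ℝ) :
    (inclM g)ᵀ * M * inclM g = M.submatrix g g := by
  ext a b
  simp [Matrix.mul_apply, inclM, Matrix.transpose_apply, mul_ite, ite_mul,
    Finset.sum_ite_eq, Finset.sum_ite_eq']

lemma inclM_tmul (g : κ → ι) (hg : Function.Injective g) : (inclM g)ᵀ * inclM g = 1 := by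
  ext a b
  simp only [Matrix.mul_apply, inclM, Matrix.transpose_apply, Matrix.of_apply, ite_mul, one_mul,
    zero_mul, Finset.sum_ite_eq, Finset.mem_univ, if_true, Matrix.one_apply]
  by_cases h : a = b <;> simp [h, hg.eq_iff]; exact fun hh => h hh.symm

lemma conj_quad (B : Matrix ι ι ℝ) (M : Matrix ι κ ℝ) (x : κ → ℝ) :
    (M *ᵥ x) ⬝ᵥ (B *ᵥ (M *ᵥ x)) = x ⬝ᵥ ((Mᵀ * B * M) *ᵥ x) := by
  rw [mulVec_mulVec, dotProduct_mulVec, vecMul_mulVec, dotProduct_mulVec]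
  rw [Matrix.mul_assoc]

lemma inclM_mulVec_inj (g : κ → ι) (hg : Function.Injective g) :
    Function.Injective (fun x : κ → ℝ => inclM g *ᵥ x) := by
  intro x y h
  have := congrArg (fun v => (inclM g)ᵀ *ᵥ v) h
  simpa [mulVec_mulVec, inclM_tmul g hg] using this


variable {ι : Type*} [Fintype ι] [DecidableEq ι]

lemma charpoly_conj' (P M : Matrix ι ι ℝ) (hP : IsUnit P.det) :
    (P⁻¹ * M * P).charpoly = M.charpoly := by
  have hmap : ∀ N : Matrix ι ι ℝ, charmatrix N
      = Matrix.diagonal (fun _ => (X : ℝ[X])) - N.map C := by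
    intro N; ext a b; by_cases h : a = b <;>
      simp [charmatrix_apply, Matrix.diagonal_apply, h, Matrix.sub_apply, Matrix.map_apply]
  have key : P.map C * charmatrix (P⁻¹ * M * P) = charmatrix M * P.map C := by
    rw [hmap, hmap, Matrix.mul_sub, Matrix.sub_mul]
    congr 1
    · ext a b
      rw [Matrix.mul_diagonal, Matrix.diagonal_mul, mul_comm]
    · rw [← Matrix.map_mul, ← Matrix.map_mul]
      congr 1
      rw [← mul_assoc, Matrix.mul_nonsing_inv_cancel_left _ _ hP]
  have hdet := congrArg Matrix.det key
  rw [Matrix.det_mul, Matrix.det_mul] at hdet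
  have hPd : (P.map C).det ≠ 0 := by
    have hPC : (P.map C).det = C P.det := by
      rw [← RingHom.mapMatrix_apply, ← RingHom.map_det]
    rw [hPC]
    simpa using hP.ne_zero
  have := mul_comm ((charmatrix M).det) ((P.map C).det) ▸ hdet
  exact mul_left_cancel₀ hPd this

lemma charpoly_diagonal' (d : ι → ℝ) :
    (Matrix.diagonal d).charpoly = ∏ i, (X - C (d i)) := by
  have : charmatrix (Matrix.diagonal d) = Matrix.diagonal (fun i => X - C (d i)) := by
    ext a b; by_cases h : a = b <;>
      simp [charmatrix_apply, Matrix.diagonal_apply, h]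
  rw [Matrix.charpoly, this, Matrix.det_diagonal]

lemma posdef_submatrix_s6 {ι κ : Type*} [Fintype ι] [Fintype κ] [DecidableEq ι] [DecidableEq κ]
    {M : Matrix ι ι ℝ} (hM : M.PosDef) (g : κ → ι) (hg : Function.Injective g) :
    (M.submatrix g g).PosDef := by
  constructor
  · have h := hM.1
    simpa [Matrix.IsHermitian, Matrix.conjTranspose_submatrix] using
      congrArg (fun N => Matrix.submatrix N g g) h
  · exact (hM.submatrix hg).2

lemma conj_conj {ι κ : Type*} [Fintype ι] [Fintype κ] (P : Matrix ι ι ℝ)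
    (R : Matrix ι ι ℝ) (Q : Matrix ι κ ℝ) :
    (R * Q)ᵀ * P * (R * Q) = Qᵀ * (Rᵀ * P * R) * Q := by
  rw [Matrix.transpose_mul]
  simp only [Matrix.mul_assoc]

lemma quad_diag {κ : Type*} [Fintype κ] [DecidableEq κ] (d : κ → ℝ) (x : κ → ℝ) :
    x ⬝ᵥ (Matrix.diagonal d *ᵥ x) = ∑ i, d i * x i ^ 2 := by
  simp only [dotProduct, Matrix.mulVec_diagonal]
  exact Finset.sum_congr rfl fun i _ => by ring

open scoped MatrixOrder in
lemma master {ι : Type*} [Fintype ι] [DecidableEq ι] {n : ℕ}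
    (Xm Ym : Matrix ι ι ℝ) (hXm : Xm.PosDef) (hYm : Ym.PosDef)
    (γ : Fin n → ℝ) (hord : Antitone γ)
    (hchar : (Ym⁻¹ * Xm).charpoly = ∏ j : Fin n, (X - C (γ j))) :
    (∀ (k : ℕ) (hk : k < n) (W : Submodule ℝ (ι → ℝ)), k + 1 ≤ Module.finrank ℝ W →
      ∃ u, u ∈ W ∧ u ≠ 0 ∧ u ⬝ᵥ (Xm *ᵥ u) ≤ γ ⟨k, hk⟩ * (u ⬝ᵥ (Ym *ᵥ u))) ∧
    (∀ (k : ℕ) (hk : k < n), ∃ W : Submodule ℝ (ι → ℝ), k + 1 ≤ Module.finrank ℝ W ∧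
      ∀ u ∈ W, γ ⟨k, hk⟩ * (u ⬝ᵥ (Ym *ᵥ u)) ≤ u ⬝ᵥ (Xm *ᵥ u)) := by
  classical
  set S := CFC.sqrt Ym with hSdef
  have hSS : S * S = Ym := CFC.sqrt_mul_sqrt_self Ym hYm.posSemidef.nonneg
  have hSH : S.IsHermitian := (Matrix.nonneg_iff_posSemidef.mp (CFC.sqrt_nonneg Ym)).1
  have hSdet : IsUnit S.det := by
    have h1 : S.det * S.det = Ym.det := by rw [← Matrix.det_mul, hSS]
    have h2 : S.det ≠ 0 := by
      intro h
      rw [h, mul_zero] at h1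
      exact hYm.det_pos.ne' h1.symm
    exact h2.isUnit
  have hSt : Sᵀ = S := by
    rw [← Matrix.conjTranspose_eq_transpose_of_trivial]; exact hSH
  have hSit : (S⁻¹)ᵀ = S⁻¹ := by rw [Matrix.transpose_nonsing_inv, hSt]
  set H := S⁻¹ * Xm * S⁻¹ with hHdef
  have hHH : H.IsHermitian := by
    have hXH : Xmᴴ = Xm := hXm.1
    have hSiH : (S⁻¹)ᴴ = S⁻¹ := by rw [Matrix.conjTranspose_nonsing_inv, hSH]
    unfold H
    rw [Matrix.IsHermitian, Matrix.conjTranspose_mul, Matrix.conjTranspose_mul, hXH, hSiH,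
      Matrix.mul_assoc]
  have hsim : Ym⁻¹ * Xm = S⁻¹ * H * S := by
    rw [hHdef, ← hSS, Matrix.mul_inv_rev]
    have h1 : S⁻¹ * S = 1 := Matrix.nonsing_inv_mul S hSdet
    simp only [Matrix.mul_assoc, h1, Matrix.mul_one]
  have hcharH : H.charpoly = ∏ j : Fin n, (X - C (γ j)) := by
    rw [← hchar, hsim, charpoly_conj' S H hSdet]
  set Ucoe : Matrix ι ι ℝ := (hHH.eigenvectorUnitary : Matrix ι ι ℝ) with hUdef
  set μ : ι → ℝ := hHH.eigenvalues with hμdef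
  have hUu : star Ucoe * Ucoe = 1 := Unitary.coe_star_mul_self hHH.eigenvectorUnitary
  have hUu' : Ucoe * star Ucoe = 1 := Unitary.coe_mul_star_self hHH.eigenvectorUnitary
  have hUdet : IsUnit Ucoe.det := by
    have := congrArg Matrix.det hUu'
    rw [Matrix.det_mul, Matrix.det_one] at this
    exact IsUnit.of_mul_eq_one _ this
  have hUt : Ucoeᵀ = star Ucoe := by
    rw [Matrix.star_eq_conjTranspose, Matrix.conjTranspose_eq_transpose_of_trivial]
  have hdiag : star Ucoe * H * Ucoe = Matrix.diagonal μ := by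
    have h := hHH.conjStarAlgAut_star_eigenvectorUnitary
    simpa using h
  have hcharμ : H.charpoly = ∏ i : ι, (X - C (μ i)) := by
    have hinv : Ucoe⁻¹ = star Ucoe := Matrix.inv_eq_left_inv hUu
    have h2 : Ucoe⁻¹ * H * Ucoe = Matrix.diagonal μ := by rw [hinv]; exact hdiag
    rw [← charpoly_conj' Ucoe H hUdet, h2, charpoly_diagonal']
  have hms : Multiset.map μ Finset.univ.val = Multiset.map γ Finset.univ.val := by
    have h1 : ((Multiset.map μ Finset.univ.val).map (fun a => X - C a)).prod
        = ((Multiset.map γ Finset.univ.val).map (fun a => X - C a)).prod := by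
      rw [Multiset.map_map, Multiset.map_map, ← Finset.prod_eq_multiset_prod,
        ← Finset.prod_eq_multiset_prod]
      simp only [Function.comp]
      rw [← hcharμ, hcharH]
    have h2 := congrArg Polynomial.roots h1
    rwa [roots_multiset_prod_X_sub_C, roots_multiset_prod_X_sub_C] at h2
  have hn : Fintype.card ι = n := by
    have := congrArg Multiset.card hms
    simpa using this
  have hcount : ∀ c : ℝ, (Finset.univ.filter fun j : Fin n => γ j ≤ c).card
      = (Finset.univ.filter fun j : ι => μ j ≤ c).card := by
    intro c
    have h3 := congrArg (Multiset.countP (fun t => t ≤ c)) hms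
    rw [Multiset.countP_map, Multiset.countP_map] at h3
    exact h3.symm
  have hcount' : ∀ c : ℝ, (Finset.univ.filter fun j : Fin n => c ≤ γ j).card
      = (Finset.univ.filter fun j : ι => c ≤ μ j).card := by
    intro c
    have h3 := congrArg (Multiset.countP (fun t => c ≤ t)) hms
    rw [Multiset.countP_map, Multiset.countP_map] at h3
    exact h3.symm
  have h1 : (S⁻¹ * Ucoe)ᵀ * Xm * (S⁻¹ * Ucoe) = Matrix.diagonal μ := by
    rw [Matrix.transpose_mul, hSit, hUt, ← hdiag, hHdef]
    simp only [Matrix.mul_assoc]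
  have h2 : (S⁻¹ * Ucoe)ᵀ * Ym * (S⁻¹ * Ucoe) = 1 := by
    rw [Matrix.transpose_mul, hSit, hUt, ← hSS]
    simp only [Matrix.mul_assoc, Matrix.mul_nonsing_inv_cancel_left _ _ hSdet,
      Matrix.nonsing_inv_mul_cancel_left _ _ hSdet]
    exact hUu
  have key : ∀ T : Finset ι, ∃ WT : Submodule ℝ (ι → ℝ),
      Module.finrank ℝ WT = T.card ∧
      ∀ u ∈ WT, ∃ x : {j // j ∈ T} → ℝ,
        u ⬝ᵥ (Xm *ᵥ u) = ∑ i, μ i.1 * x i ^ 2 ∧ u ⬝ᵥ (Ym *ᵥ u) = ∑ i, x i ^ 2 := by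
    intro T
    set g : {j // j ∈ T} → ι := Subtype.val with hg
    have hginj : Function.Injective g := Subtype.val_injective
    set M : Matrix ι {j // j ∈ T} ℝ := (S⁻¹ * Ucoe) * inclM g with hM
    have hMX : Mᵀ * Xm * M = Matrix.diagonal (fun i : {j // j ∈ T} => μ i.1) := by
      rw [hM, conj_conj, h1, inclM_conj, Matrix.submatrix_diagonal _ _ hginj]
      rfl
    have hMY : Mᵀ * Ym * M = 1 := by
      rw [hM, conj_conj, h2, Matrix.mul_one, inclM_tmul g hginj]
    have hMinj : Function.Injective (Matrix.mulVecLin M) := by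
      rw [← LinearMap.ker_eq_bot]
      rw [Submodule.eq_bot_iff]
      intro x hx
      rw [LinearMap.mem_ker, Matrix.mulVecLin_apply] at hx
      have e1 : x ⬝ᵥ x = (M *ᵥ x) ⬝ᵥ (Ym *ᵥ (M *ᵥ x)) := by
        rw [conj_quad, hMY, Matrix.one_mulVec]
      rw [hx] at e1
      simp only [zero_dotProduct, dotProduct_zero] at e1
      exact dotProduct_self_eq_zero.mp e1
    refine ⟨LinearMap.range (Matrix.mulVecLin M), ?_, ?_⟩
    · rw [LinearMap.finrank_range_of_inj hMinj]
      simp [Module.finrank_pi]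
    · rintro u ⟨x, rfl⟩
      refine ⟨x, ?_, ?_⟩
      · rw [Matrix.mulVecLin_apply, conj_quad, hMX, quad_diag]
      · rw [Matrix.mulVecLin_apply, conj_quad, hMY, Matrix.one_mulVec]
        simp only [dotProduct]
        exact Finset.sum_congr rfl fun i _ => by ring
  constructor
  · intro k hk W hW
    set c := γ ⟨k, hk⟩ with hc
    set T := Finset.univ.filter (fun j : ι => μ j ≤ c) with hT
    have hTcard : n - k ≤ T.card := by
      rw [hT, ← hcount c]
      have hsub : Finset.Ici (⟨k, hk⟩ : Fin n) ⊆
          Finset.univ.filter (fun j : Fin n => γ j ≤ c) := by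
        intro j hj
        exact Finset.mem_filter.mpr ⟨Finset.mem_univ _, hord (Finset.mem_Ici.mp hj)⟩
      calc n - k = (Finset.Ici (⟨k, hk⟩ : Fin n)).card := by rw [Fin.card_Ici]
        _ ≤ _ := Finset.card_le_card hsub
    obtain ⟨WT, hWTrank, hWTrep⟩ := key T
    have hfr : Module.finrank ℝ (ι → ℝ) = n := by
      rw [Module.finrank_pi, hn]
    have hne : W ⊓ WT ≠ ⊥ := by
      intro hbot
      have hd := Submodule.finrank_sup_add_finrank_inf_eq W WT
      rw [hbot, finrank_bot, add_zero] at hd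
      have hle := Submodule.finrank_le (W ⊔ WT)
      rw [hfr] at hle
      omega
    obtain ⟨u, hu, hu0⟩ := Submodule.exists_mem_ne_zero_of_ne_bot hne
    obtain ⟨x, hqX, hqY⟩ := hWTrep u hu.2
    refine ⟨u, hu.1, hu0, ?_⟩
    rw [hqX, hqY, Finset.mul_sum]
    refine Finset.sum_le_sum fun i _ => ?_
    have hμi : μ i.1 ≤ c := (Finset.mem_filter.mp i.2).2
    exact mul_le_mul_of_nonneg_right hμi (sq_nonneg _)
  · intro k hk
    set c := γ ⟨k, hk⟩ with hc
    set T := Finset.univ.filter (fun j : ι => c ≤ μ j) with hT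
    have hTcard : k + 1 ≤ T.card := by
      rw [hT, ← hcount' c]
      have hsub : Finset.Iic (⟨k, hk⟩ : Fin n) ⊆
          Finset.univ.filter (fun j : Fin n => c ≤ γ j) := by
        intro j hj
        exact Finset.mem_filter.mpr ⟨Finset.mem_univ _, hord (Finset.mem_Iic.mp hj)⟩
      calc k + 1 = (Finset.Iic (⟨k, hk⟩ : Fin n)).card := by rw [Fin.card_Iic]
        _ ≤ _ := Finset.card_le_card hsub
    obtain ⟨WT, hWTrank, hWTrep⟩ := key T
    refine ⟨WT, by omega, ?_⟩
    intro u hu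
    obtain ⟨x, hqX, hqY⟩ := hWTrep u hu
    rw [hqX, hqY, Finset.mul_sum]
    refine Finset.sum_le_sum fun i _ => ?_
    exact mul_le_mul_of_nonneg_right ((Finset.mem_filter.mp i.2).2) (sq_nonneg _)

theorem interlacing_inv_mul_principal_submatrices (p : ℕ)
    (SX SY : Matrix (Fin p) (Fin p) ℝ) (hX : SX.PosDef) (hY : SY.PosDef)
    (A A' : Finset (Fin p)) (hAA : A' ⊆ A)
    (γA : Fin A.card → ℝ) (γA' : Fin A'.card → ℝ)
    (hordA : Antitone γA) (hordA' : Antitone γA')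
    (hcharA : ((SY.submatrix (fun i : A => (i : Fin p)) (fun i : A => (i : Fin p)))⁻¹ *
        (SX.submatrix (fun i : A => (i : Fin p)) (fun i : A => (i : Fin p)))).charpoly
        = ∏ i, (X - C (γA ((Fintype.equivFinOfCardEq  (Fintype.card_coe _)) i)))
        )
    (hcharA' : ((SY.submatrix (fun i : A' => (i : Fin p)) (fun i : A' => (i : Fin p)))⁻¹ *
        (SX.submatrix (fun i : A' => (i : Fin p)) (fun i : A' => (i : Fin p)))).charpoly
        = ∏ i, (X - C (γA' ((Fintype.equivFinOfCardEq  (Fintype.card_coe _)) i)))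
        ) :
    ∀ i : Fin A'.card, γA' i ≤ γA (Fin.castLE (Finset.card_le_card hAA) i) := by
  classical
  intro i
  set f : ↥A → Fin p := fun j => (j : Fin p) with hf
  set f' : ↥A' → Fin p := fun j => (j : Fin p) with hf'
  set g : ↥A' → ↥A := fun j => ⟨j.1, hAA j.2⟩ with hg
  have hfinj : Function.Injective f := Subtype.val_injective
  have hf'inj : Function.Injective f' := Subtype.val_injective
  have hginj : Function.Injective g := by
    intro a b h
    rw [hg, Subtype.mk.injEq] at h
    exact Subtype.ext h
  set XA := SX.submatrix f f with hXA'
  set YA := SY.submatrix f f with hYA'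
  set XB := SX.submatrix f' f' with hXB'
  set YB := SY.submatrix f' f' with hYB'
  have hXAp : XA.PosDef := posdef_submatrix_s6 hX f hfinj
  have hYAp : YA.PosDef := posdef_submatrix_s6 hY f hfinj
  have hXBp : XB.PosDef := posdef_submatrix_s6 hX f' hf'inj
  have hYBp : YB.PosDef := posdef_submatrix_s6 hY f' hf'inj
  have hcA : (YA⁻¹ * XA).charpoly = ∏ j : Fin A.card, (X - C (γA j)) := by
    rw [hcharA]
    exact Equiv.prod_comp (Fintype.equivFinOfCardEq (Fintype.card_coe A))
      (fun j => Polynomial.X - C (γA j))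
  have hcB : (YB⁻¹ * XB).charpoly = ∏ j : Fin A'.card, (X - C (γA' j)) := by
    rw [hcharA']
    exact Equiv.prod_comp (Fintype.equivFinOfCardEq (Fintype.card_coe A'))
      (fun j => Polynomial.X - C (γA' j))
  obtain ⟨ha, -⟩ := master XA YA hXAp hYAp γA hordA hcA
  obtain ⟨-, hb⟩ := master XB YB hXBp hYBp γA' hordA' hcB
  obtain ⟨W', hW'rank, hW'bound⟩ := hb i.1 i.2
  set φ := Matrix.mulVecLin (inclM g) with hφ
  have hφinj : Function.Injective φ := inclM_mulVec_inj g hginj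
  set W : Submodule ℝ (↥A → ℝ) := W'.map φ with hW
  have hWrank : Module.finrank ℝ W = Module.finrank ℝ W' := by
    have h1 : W = LinearMap.range (φ.comp W'.subtype) := by
      rw [LinearMap.range_comp, Submodule.range_subtype]
    rw [h1, LinearMap.finrank_range_of_inj]
    rw [LinearMap.coe_comp]
    exact hφinj.comp (Submodule.injective_subtype W')
  have hik : (i : ℕ) < A.card := lt_of_lt_of_le i.2 (Finset.card_le_card hAA)
  obtain ⟨u, huW, hu0, hineq⟩ := ha i.1 hik W (by rw [hWrank]; omega)
  obtain ⟨u', hu'W', hu'eq⟩ := Submodule.mem_map.mp huW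
  have hu'0 : u' ≠ 0 := by
    intro h
    apply hu0
    rw [← hu'eq, h, map_zero]
  have hquad : ∀ B : Matrix (Fin p) (Fin p) ℝ,
      u ⬝ᵥ ((B.submatrix f f) *ᵥ u) = u' ⬝ᵥ ((B.submatrix f' f') *ᵥ u') := by
    intro B
    have hfg : f ∘ g = f' := rfl
    rw [← hu'eq, hφ, Matrix.mulVecLin_apply, conj_quad, inclM_conj,
      Matrix.submatrix_submatrix, hfg]
  have h1 := hW'bound u' hu'W'
  have h2 : γA' i * (u' ⬝ᵥ (YB *ᵥ u')) ≤ γA (Fin.castLE (Finset.card_le_card hAA) i)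
      * (u' ⬝ᵥ (YB *ᵥ u')) := by
    calc γA' i * (u' ⬝ᵥ (YB *ᵥ u')) = γA' ⟨i.1, i.2⟩ * (u' ⬝ᵥ (YB *ᵥ u')) := by
          rw [Fin.eta]
      _ ≤ u' ⬝ᵥ (XB *ᵥ u') := h1
      _ = u ⬝ᵥ (XA *ᵥ u) := (hquad SX).symm
      _ ≤ γA ⟨i.1, hik⟩ * (u ⬝ᵥ (YA *ᵥ u)) := hineq
      _ = γA (Fin.castLE (Finset.card_le_card hAA) i) * (u' ⬝ᵥ (YB *ᵥ u')) := by
          rw [hquad SY]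
          rfl
  have hpos : 0 < u' ⬝ᵥ (YB *ᵥ u') := by
    have := hYBp.dotProduct_mulVec_pos hu'0
    simpa using this
  exact le_of_mul_le_mul_right (by linarith [h2]) hpos
end

section
/- Monotonicity of the local Gaussian KL divergence: let Σ_X, Σ_Y be p×p positive definite matrices and Δ ∈ ℝ^p. For an index set A ⊆ {1,…,p}, define KL_A = (1/2)(tr((Σ_{A,Y})⁻¹ Σ_{A,X}) - |A| + Δ_Aᵀ (Σ_{A,Y})⁻¹ Δ_A + ln(det Σ_{A,Y} / det Σ_{A,X})), where Σ_{A,·} and Δ_A are the principal submatrix and subvector indexed by A. Suppose A' ⊆ A and all eigenvalues of (Σ_{A',Y})⁻¹ Σ_{A',X} are at least 1. Then KL_{A'} ≤ KL_A. -/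
open Matrix

section AuxLemmas

variable {m n : Type*} [Fintype m] [Fintype n] [DecidableEq m] [DecidableEq n]

private lemma psd_quad_nonneg' {M : Matrix n n ℝ} (hM : M.PosSemidef) (x : n → ℝ) :
    0 ≤ x ⬝ᵥ (M *ᵥ x) := by simpa using hM.dotProduct_mulVec_nonneg x

private lemma pd_quad_pos' {M : Matrix n n ℝ} (hM : M.PosDef) {x : n → ℝ} (hx : x ≠ 0) :
    0 < x ⬝ᵥ (M *ᵥ x) := by simpa using hM.dotProduct_mulVec_pos hx

private lemma transpose_eq_self_of_herm' {M : Matrix n n ℝ} (hM : M.IsHermitian) : Mᵀ = M := by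
  rwa [IsHermitian, conjTranspose_eq_transpose_of_trivial] at hM

/-- Variational characterization: `2⟨x,v⟩ - xᵀMx ≤ vᵀM⁻¹v` for positive definite `M`. -/
private lemma dotProduct_inv_le' {M : Matrix n n ℝ} (hM : M.PosDef) (x v : n → ℝ) :
    2 * (x ⬝ᵥ v) - x ⬝ᵥ (M *ᵥ x) ≤ v ⬝ᵥ (M⁻¹ *ᵥ v) := by
  have hdet : IsUnit M.det := isUnit_iff_ne_zero.mpr hM.det_pos.ne'
  have hMT : Mᵀ = M := transpose_eq_self_of_herm' hM.1
  have e1 : M *ᵥ (M⁻¹ *ᵥ v) = v := by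
    rw [mulVec_mulVec, mul_nonsing_inv _ hdet, one_mulVec]
  have e2 : (M⁻¹ *ᵥ v) ⬝ᵥ (M *ᵥ x) = v ⬝ᵥ x := by
    rw [dotProduct_mulVec, ← mulVec_transpose, hMT, e1]
  have h0 := psd_quad_nonneg' hM.posSemidef (x - M⁻¹ *ᵥ v)
  rw [mulVec_sub, sub_dotProduct, dotProduct_sub, dotProduct_sub, e1, e2] at h0
  have e3 : (M⁻¹ *ᵥ v) ⬝ᵥ v = v ⬝ᵥ (M⁻¹ *ᵥ v) := dotProduct_comm _ _
  have e4 : v ⬝ᵥ x = x ⬝ᵥ v := dotProduct_comm _ _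
  linarith

/-- A principal submatrix (along an injective map) of a positive definite matrix is
positive definite. -/
private lemma posDef_submatrix_inj' {M : Matrix n n ℝ} (hM : M.PosDef) (f : m → n)
    (hf : Function.Injective f) : (M.submatrix f f).PosDef := by
  refine PosDef.of_dotProduct_mulVec_pos ?_ ?_
  · show (M.submatrix f f)ᴴ = M.submatrix f f
    rw [conjTranspose_submatrix, hM.1.eq]
  · intro x hx
    set y : n → ℝ := fun j => ∑ i, (if f i = j then x i else 0) with hy
    have hyf : ∀ i, y (f i) = x i := by
      intro i
      rw [hy]
      simp only []
      rw [Finset.sum_eq_single i (fun b _ hb => if_neg (fun h => hb (hf h))) (by simp)]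
      simp
    have hMy : ∀ j, (M *ᵥ y) j = ∑ i, M j (f i) * x i := by
      intro j
      simp only [mulVec, dotProduct, hy, Finset.mul_sum, mul_ite, mul_zero]
      rw [Finset.sum_comm]
      refine Finset.sum_congr rfl fun i _ => ?_
      rw [Finset.sum_ite_eq]
      simp
    have key : y ⬝ᵥ (M *ᵥ y) = x ⬝ᵥ ((M.submatrix f f) *ᵥ x) := by
      calc y ⬝ᵥ (M *ᵥ y) = ∑ j, ∑ i, (if f i = j then x i * (M *ᵥ y) j else 0) := by
            simp [dotProduct, hy, Finset.sum_mul, ite_mul]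
        _ = ∑ i, ∑ j, (if f i = j then x i * (M *ᵥ y) j else 0) := Finset.sum_comm
        _ = ∑ i, x i * (M *ᵥ y) (f i) := by
            refine Finset.sum_congr rfl fun i _ => ?_
            rw [Finset.sum_ite_eq]; simp
        _ = x ⬝ᵥ ((M.submatrix f f) *ᵥ x) := by
            simp only [hMy]
            rfl
    have hyne : y ≠ 0 := by
      intro h
      apply hx
      funext i
      have := congrFun h (f i)
      rw [hyf i] at this
      exact this
    have h2 := hM.dotProduct_mulVec_pos hyne
    rw [star_trivial, key, ← star_trivial x] at h2
    exact h2

private lemma trace_eq_sum_eig' {A : Matrix n n ℝ} (hA : A.IsHermitian) :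
    trace A = ∑ i, hA.eigenvalues i := by
  conv_lhs => rw [hA.spectral_theorem]
  rw [Unitary.conjStarAlgAut_apply, trace_mul_cycle, Unitary.coe_star_mul_self]
  simp [trace_diagonal]

open scoped MatrixOrder in
/-- The core inequality `n + log (det M · det X) ≤ tr (M X)` for positive definite `M`, `X`. -/
private lemma core_ineq' {M X : Matrix n n ℝ} (hM : M.PosDef) (hX : X.PosDef) :
    (Fintype.card n : ℝ) + Real.log (M.det * X.det) ≤ trace (M * X) := by
  set R := CFC.sqrt X with hRdef
  have hRR : R * R = X := CFC.sqrt_mul_sqrt_self X (nonneg_iff_posSemidef.mpr hX.posSemidef)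
  have hRpsd : R.PosSemidef := nonneg_iff_posSemidef.mp (CFC.sqrt_nonneg X)
  have hdetR : R.det * R.det = X.det := by rw [← det_mul, hRR]
  have hdetRne : R.det ≠ 0 := by
    intro h; rw [h, mul_zero] at hdetR; exact hX.det_pos.ne' hdetR.symm
  have hRunit : IsUnit R.det := isUnit_iff_ne_zero.mpr hdetRne
  have hRT : Rᵀ = R := transpose_eq_self_of_herm' hRpsd.1
  set Z := R * M * R with hZdef
  have hZ : Z.PosDef := by
    refine PosDef.of_dotProduct_mulVec_pos ?_ ?_
    · show Zᴴ = Z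
      rw [hZdef, conjTranspose_mul, conjTranspose_mul, hRpsd.1, hM.1.eq, Matrix.mul_assoc]
    · intro z hz
      have hinj : Function.Injective (R.mulVec) :=
        mulVec_injective_iff_isUnit.2 (isUnit_iff_isUnit_det _ |>.2 hRunit)
      have hRz : R *ᵥ z ≠ 0 := fun h => hz (hinj (by simpa using h))
      have h2 := hM.dotProduct_mulVec_pos hRz
      have e1 : (R * M * R) *ᵥ z = R *ᵥ (M *ᵥ (R *ᵥ z)) := by
        rw [mulVec_mulVec, mulVec_mulVec, Matrix.mul_assoc]
      have e2 : star z ⬝ᵥ (R *ᵥ (M *ᵥ (R *ᵥ z))) = star (R *ᵥ z) ⬝ᵥ (M *ᵥ (R *ᵥ z)) := by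
        rw [star_trivial, star_trivial, dotProduct_mulVec, ← mulVec_transpose, hRT]
      show 0 < star z ⬝ᵥ (R * M * R) *ᵥ z
      rw [e1, e2]; exact h2
  have htr : trace (M * X) = trace Z := by
    rw [hZdef, ← hRR, ← Matrix.mul_assoc, trace_mul_comm (M * R) R, ← Matrix.mul_assoc]
  have hdetZ : Z.det = M.det * X.det := by
    rw [hZdef, det_mul, det_mul, ← hdetR]; ring
  have hev : ∀ i, 0 < hZ.1.eigenvalues i := hZ.eigenvalues_pos
  have hdet2 : Z.det = ∏ i, hZ.1.eigenvalues i := by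
    simpa using hZ.1.det_eq_prod_eigenvalues
  rw [htr, trace_eq_sum_eig' hZ.1, ← hdetZ, hdet2]
  rw [Real.log_prod (fun i _ => (hev i).ne')]
  have hle : ∀ i ∈ (Finset.univ : Finset n),
      (1 : ℝ) + Real.log (hZ.1.eigenvalues i) ≤ hZ.1.eigenvalues i := by
    intro i _
    have := Real.log_le_sub_one_of_pos (hev i)
    linarith
  calc (Fintype.card n : ℝ) + ∑ i, Real.log (hZ.1.eigenvalues i)
      = ∑ i : n, (1 + Real.log (hZ.1.eigenvalues i)) := by
        rw [Finset.sum_add_distrib, Finset.sum_const, Finset.card_univ, nsmul_eq_mul, mul_one]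
    _ ≤ ∑ i, hZ.1.eigenvalues i := Finset.sum_le_sum hle

/-- Unnormalized Gaussian KL divergence expression. -/
private noncomputable def klAux (X Y : Matrix n n ℝ) (Δ : n → ℝ) : ℝ :=
  trace (Y⁻¹ * X) - Fintype.card n + Δ ⬝ᵥ (Y⁻¹ *ᵥ Δ) + Real.log (Y.det / X.det)

private lemma klAux_reindex (X Y : Matrix n n ℝ) (e : m ≃ n) (Δ : n → ℝ) :
    klAux (X.submatrix e e) (Y.submatrix e e) (Δ ∘ e) = klAux X Y Δ := by
  simp only [klAux]
  rw [inv_submatrix_equiv Y e e]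
  have h2 : trace ((Y⁻¹.submatrix e e) * (X.submatrix e e)) = trace (Y⁻¹ * X) := by
    rw [submatrix_mul_equiv]
    exact Fintype.sum_equiv e _ _ (fun i => rfl)
  have h3 : (Fintype.card m : ℝ) = Fintype.card n := by rw [Fintype.card_congr e]
  have h5 : (Δ ∘ e) ⬝ᵥ ((Y⁻¹.submatrix e e) *ᵥ (Δ ∘ e)) = Δ ⬝ᵥ (Y⁻¹ *ᵥ Δ) := by
    rw [submatrix_mulVec_equiv]
    have : (Δ ∘ e) ∘ e.symm = Δ := by funext j; simp
    rw [this]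
    exact Fintype.sum_equiv e _ _ (fun i => rfl)
  rw [h2, h3, h5, det_submatrix_equiv_self, det_submatrix_equiv_self]

end AuxLemmas

section Blocks

variable {α β : Type*} [Fintype α] [Fintype β] [DecidableEq α] [DecidableEq β]

private lemma trace_fromBlocks' (A : Matrix α α ℝ) (B : Matrix α β ℝ) (C : Matrix β α ℝ)
    (D : Matrix β β ℝ) : trace (fromBlocks A B C D) = trace A + trace D := by
  simp [Matrix.trace, Matrix.diag, Fintype.sum_sum_type, fromBlocks]

private lemma quad_sub_le' {Y : Matrix (α ⊕ β) (α ⊕ β) ℝ} (hY : Y.PosDef) (Δ : α ⊕ β → ℝ) :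
    (fun i => Δ (Sum.inl i)) ⬝ᵥ ((Y.toBlocks₁₁)⁻¹ *ᵥ (fun i => Δ (Sum.inl i)))
      ≤ Δ ⬝ᵥ (Y⁻¹ *ᵥ Δ) := by
  have hApd : (Y.toBlocks₁₁).PosDef := posDef_submatrix_inj' hY Sum.inl Sum.inl_injective
  set A := Y.toBlocks₁₁ with hA
  set u : α → ℝ := fun i => Δ (Sum.inl i) with hu
  set x₀ := A⁻¹ *ᵥ u with hx₀
  have hdet : IsUnit A.det := isUnit_iff_ne_zero.mpr hApd.det_pos.ne'
  have e0 : A *ᵥ x₀ = u := by rw [hx₀, mulVec_mulVec, mul_nonsing_inv _ hdet, one_mulVec]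
  have key := dotProduct_inv_le' hY (Sum.elim x₀ 0) Δ
  have e1 : Sum.elim x₀ 0 ⬝ᵥ Δ = u ⬝ᵥ x₀ := by
    conv_lhs => rw [← Sum.elim_comp_inl_inr Δ]
    rw [sumElim_dotProduct_sumElim]
    simp [dotProduct_comm x₀]
    rfl
  have e2 : Sum.elim x₀ 0 ⬝ᵥ (Y *ᵥ Sum.elim x₀ 0) = u ⬝ᵥ x₀ := by
    conv_lhs => rw [← fromBlocks_toBlocks Y, fromBlocks_mulVec]
    rw [sumElim_dotProduct_sumElim]
    simp [← hA, e0, dotProduct_comm x₀]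
  rw [e1, e2] at key
  calc u ⬝ᵥ (A⁻¹ *ᵥ u) = 2 * (u ⬝ᵥ x₀) - u ⬝ᵥ x₀ := by rw [hx₀]; ring
    _ ≤ Δ ⬝ᵥ (Y⁻¹ *ᵥ Δ) := key

/-- Key monotonicity step: the KL expression on the first block is bounded by the full one. -/
private lemma klAux_block (X Y : Matrix (α ⊕ β) (α ⊕ β) ℝ) (hX : X.PosDef) (hY : Y.PosDef)
    (Δ : α ⊕ β → ℝ) :
    klAux X.toBlocks₁₁ Y.toBlocks₁₁ (fun i => Δ (Sum.inl i)) ≤ klAux X Y Δ := by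
  have hPpd : (X.toBlocks₁₁).PosDef := posDef_submatrix_inj' hX Sum.inl Sum.inl_injective
  have hApd : (Y.toBlocks₁₁).PosDef := posDef_submatrix_inj' hY Sum.inl Sum.inl_injective
  set P := X.toBlocks₁₁ with hPdef
  set A := Y.toBlocks₁₁ with hAdef
  have hPdet : IsUnit P.det := isUnit_iff_ne_zero.mpr hPpd.det_pos.ne'
  have hAdet : IsUnit A.det := isUnit_iff_ne_zero.mpr hApd.det_pos.ne'
  have hYdet : IsUnit Y.det := isUnit_iff_ne_zero.mpr hY.det_pos.ne'
  set W : Matrix α α ℝ := A⁻¹ - P⁻¹ with hWdef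
  set Θ : Matrix (α ⊕ β) (α ⊕ β) ℝ := fromBlocks W 0 0 0 with hΘdef
  set M : Matrix (α ⊕ β) (α ⊕ β) ℝ := Y⁻¹ - Θ with hMdef
  -- M is positive definite
  have hMpd : M.PosDef := by
    refine PosDef.of_dotProduct_mulVec_pos ?_ ?_
    · show Mᴴ = M
      have hWh : W.IsHermitian := hApd.inv.1.sub hPpd.inv.1
      rw [hMdef, conjTranspose_sub, (hY.inv).1.eq, hΘdef, fromBlocks_conjTranspose, hWh.eq]
      simp only [conjTranspose_zero]
    · intro z hz
      have hsplit : star z ⬝ᵥ (M *ᵥ z) =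
          (z ⬝ᵥ (Y⁻¹ *ᵥ z) - (fun i => z (Sum.inl i)) ⬝ᵥ (A⁻¹ *ᵥ (fun i => z (Sum.inl i))))
          + (fun i => z (Sum.inl i)) ⬝ᵥ (P⁻¹ *ᵥ (fun i => z (Sum.inl i))) := by
        rw [star_trivial, hMdef, sub_mulVec, dotProduct_sub]
        have eΘ : z ⬝ᵥ (Θ *ᵥ z)
            = (fun i => z (Sum.inl i)) ⬝ᵥ (W *ᵥ (fun i => z (Sum.inl i))) := by
          conv_lhs => rw [← Sum.elim_comp_inl_inr z, hΘdef, fromBlocks_mulVec]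
          rw [sumElim_dotProduct_sumElim]
          simp
          rfl
        rw [eΘ, hWdef, sub_mulVec, dotProduct_sub]
        ring
      rw [hsplit]
      by_cases hz1 : (fun i => z (Sum.inl i)) = (0 : α → ℝ)
      · have : z ⬝ᵥ (Y⁻¹ *ᵥ z) > 0 := pd_quad_pos' hY.inv hz
        simp [hz1]
        linarith [this]
      · have h1 : 0 ≤ z ⬝ᵥ (Y⁻¹ *ᵥ z) -
            (fun i => z (Sum.inl i)) ⬝ᵥ (A⁻¹ *ᵥ (fun i => z (Sum.inl i))) := by
          have := quad_sub_le' hY z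
          rw [← hAdef] at this
          linarith
        have h2 : 0 < (fun i => z (Sum.inl i)) ⬝ᵥ (P⁻¹ *ᵥ (fun i => z (Sum.inl i))) :=
          pd_quad_pos' hPpd.inv hz1
        linarith
  -- trace computation
  have htrΘ : trace (Θ * X) = trace (A⁻¹ * P) - (Fintype.card α : ℝ) := by
    have e : Θ * X = fromBlocks (W * X.toBlocks₁₁) (W * X.toBlocks₁₂) 0 0 := by
      conv_lhs => rw [← fromBlocks_toBlocks X, hΘdef, fromBlocks_multiply]
      simp
    rw [e, trace_fromBlocks', trace_zero, add_zero, ← hPdef, hWdef, Matrix.sub_mul, trace_sub,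
      nonsing_inv_mul _ hPdet, trace_one]
  have htrM : trace (M * X) = trace (Y⁻¹ * X) - trace (A⁻¹ * P) + (Fintype.card α : ℝ) := by
    rw [hMdef, Matrix.sub_mul, trace_sub, htrΘ]; ring
  -- determinant computation
  have hYM : Y * M = 1 - Y * Θ := by
    rw [hMdef, Matrix.mul_sub, mul_nonsing_inv _ hYdet]
  have hYΘ : Y * Θ = fromBlocks (A * W) 0 (Y.toBlocks₂₁ * W) 0 := by
    conv_lhs => rw [← fromBlocks_toBlocks Y, hΘdef, fromBlocks_multiply]
    simp [← hAdef]
  have h1YΘ : (1 : Matrix (α ⊕ β) (α ⊕ β) ℝ) - Y * Θ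
      = fromBlocks (1 - A * W) 0 (-(Y.toBlocks₂₁ * W)) 1 := by
    rw [hYΘ, ← fromBlocks_one, sub_eq_add_neg, fromBlocks_neg, fromBlocks_add]
    congr 1 <;> simp [sub_eq_add_neg]
  have hAW : (1 : Matrix α α ℝ) - A * W = A * P⁻¹ := by
    rw [hWdef, Matrix.mul_sub, mul_nonsing_inv _ hAdet, sub_sub_cancel]
  have hdetYM : Y.det * M.det = A.det * P.det⁻¹ := by
    rw [← det_mul, hYM, h1YΘ, det_fromBlocks_zero₁₂, hAW, det_mul, det_one, mul_one,
      det_nonsing_inv, Ring.inverse_eq_inv']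
  have hMdet : M.det = A.det / (P.det * Y.det) := by
    have hPne : P.det ≠ 0 := hPpd.det_pos.ne'
    have hYne : Y.det ≠ 0 := hY.det_pos.ne'
    field_simp
    field_simp at hdetYM
    linear_combination hdetYM
  -- logarithms
  have hXne : X.det ≠ 0 := hX.det_pos.ne'
  have hPne : P.det ≠ 0 := hPpd.det_pos.ne'
  have hYne : Y.det ≠ 0 := hY.det_pos.ne'
  have hAne : A.det ≠ 0 := hApd.det_pos.ne'
  have hlog : Real.log (M.det * X.det) =
      Real.log A.det - Real.log P.det - Real.log Y.det + Real.log X.det := by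
    rw [hMdet, div_mul_eq_mul_div, Real.log_div (mul_ne_zero hAne hXne)
      (mul_ne_zero hPne hYne), Real.log_mul hAne hXne, Real.log_mul hPne hYne]
    ring
  -- assemble
  have hcore := core_ineq' hMpd hX
  rw [htrM, hlog, Fintype.card_sum] at hcore
  push_cast at hcore
  have hquad := quad_sub_le' hY Δ
  rw [← hAdef] at hquad
  simp only [klAux]
  rw [Real.log_div hAne hPne, Real.log_div hYne hXne, Fintype.card_sum]
  push_cast
  linarith

end Blocks

/-- Local Gaussian KL divergence on the coordinates indexed by `A`. -/
noncomputable def localKL {p : ℕ} (SX SY : Matrix (Fin p) (Fin p) ℝ) (Δ : Fin p → ℝ)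
    (A : Finset (Fin p)) : ℝ :=
  (1/2) * (Matrix.trace ((SY.submatrix (fun i : A => (i : Fin p)) (fun i : A => (i : Fin p)))⁻¹ *
      (SX.submatrix (fun i : A => (i : Fin p)) (fun i : A => (i : Fin p))))
    - A.card
    + (fun i : A => Δ i) ⬝ᵥ
        ((SY.submatrix (fun i : A => (i : Fin p)) (fun i : A => (i : Fin p)))⁻¹
          *ᵥ (fun i : A => Δ i))
    + Real.log ((SY.submatrix (fun i : A => (i : Fin p)) (fun i : A => (i : Fin p))).det /
        (SX.submatrix (fun i : A => (i : Fin p)) (fun i : A => (i : Fin p))).det))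

private lemma localKL_eq_klAux {p : ℕ} (SX SY : Matrix (Fin p) (Fin p) ℝ) (Δ : Fin p → ℝ)
    (A : Finset (Fin p)) :
    localKL SX SY Δ A = (1/2) *
      klAux (SX.submatrix (fun i : A => (i : Fin p)) (fun i : A => (i : Fin p)))
        (SY.submatrix (fun i : A => (i : Fin p)) (fun i : A => (i : Fin p)))
        (fun i : A => Δ i) := by
  simp only [localKL, klAux, Fintype.card_coe]

theorem localKL_monotone (p : ℕ) (SX SY : Matrix (Fin p) (Fin p) ℝ) (Δ : Fin p → ℝ)
    (hX : SX.PosDef) (hY : SY.PosDef) (A A' : Finset (Fin p)) (hAA : A' ⊆ A)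
    (heig : ∀ γ ∈ spectrum ℝ
      ((SY.submatrix (fun i : A' => (i : Fin p)) (fun i : A' => (i : Fin p)))⁻¹ *
       (SX.submatrix (fun i : A' => (i : Fin p)) (fun i : A' => (i : Fin p)))), 1 ≤ γ) :
    localKL SX SY Δ A' ≤ localKL SX SY Δ A := by
  classical
  set T : Finset (Fin p) := A \ A' with hT
  -- the combined indexing map
  set g : ({x // x ∈ A'} ⊕ {x // x ∈ T}) → Fin p :=
    Sum.elim (fun i => (i : Fin p)) (fun i => (i : Fin p)) with hg
  have hginj : Function.Injective g := by
    rintro (z | z) (z' | z') h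
    · exact congrArg Sum.inl (Subtype.ext h)
    · have h' : (z : Fin p) = (z' : Fin p) := h
      exact ((Finset.mem_sdiff.mp z'.2).2 (h' ▸ z.2)).elim
    · have h' : (z : Fin p) = (z' : Fin p) := h
      exact ((Finset.mem_sdiff.mp z.2).2 (h' ▸ z'.2)).elim
    · exact congrArg Sum.inr (Subtype.ext h)
  -- the equivalence with the subtype of A
  have hmem : ∀ z : ({x // x ∈ A'} ⊕ {x // x ∈ T}), g z ∈ A := by
    rintro (z | z)
    · exact hAA z.2
    · exact (Finset.mem_sdiff.mp z.2).1
  set f : ({x // x ∈ A'} ⊕ {x // x ∈ T}) → {x // x ∈ A} := fun z => ⟨g z, hmem z⟩ with hf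
  have hfbij : Function.Bijective f := by
    constructor
    · intro z z' h
      exact hginj (congrArg Subtype.val h)
    · intro x
      by_cases hx : (x : Fin p) ∈ A'
      · exact ⟨Sum.inl ⟨x, hx⟩, Subtype.ext rfl⟩
      · exact ⟨Sum.inr ⟨x, Finset.mem_sdiff.mpr ⟨x.2, hx⟩⟩, Subtype.ext rfl⟩
  set e : ({x // x ∈ A'} ⊕ {x // x ∈ T}) ≃ {x // x ∈ A} := Equiv.ofBijective f hfbij with he
  have hcoe : (fun i : A => (i : Fin p)) ∘ e = g := by
    funext z
    rcases z with z | z <;> rfl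
  have hsub : ∀ (N : Matrix (Fin p) (Fin p) ℝ),
      (N.submatrix (fun i : A => (i : Fin p)) (fun i : A => (i : Fin p))).submatrix e e
        = N.submatrix g g := by
    intro N
    rw [submatrix_submatrix, hcoe]
  have hΔe : (fun i : A => Δ i) ∘ e = Δ ∘ g := by
    funext z
    rcases z with z | z <;> rfl
  -- positive definiteness of submatrices
  have hXg : ((SX.submatrix g g)).PosDef := posDef_submatrix_inj' hX g hginj
  have hYg : ((SY.submatrix g g)).PosDef := posDef_submatrix_inj' hY g hginj
  -- chain of (in)equalities
  have h1 : klAux (SX.submatrix (fun i : A' => (i : Fin p)) (fun i : A' => (i : Fin p)))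
      (SY.submatrix (fun i : A' => (i : Fin p)) (fun i : A' => (i : Fin p)))
      (fun i : A' => Δ i)
      = klAux ((SX.submatrix g g).toBlocks₁₁) ((SY.submatrix g g).toBlocks₁₁)
        (fun i => (Δ ∘ g) (Sum.inl i)) := rfl
  have h2 := klAux_block (SX.submatrix g g) (SY.submatrix g g) hXg hYg (Δ ∘ g)
  have h3 : klAux (SX.submatrix g g) (SY.submatrix g g) (Δ ∘ g)
      = klAux (SX.submatrix (fun i : A => (i : Fin p)) (fun i : A => (i : Fin p)))
        (SY.submatrix (fun i : A => (i : Fin p)) (fun i : A => (i : Fin p)))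
        (fun i : A => Δ i) := by
    rw [← hsub SX, ← hsub SY, ← hΔe, klAux_reindex]
  rw [localKL_eq_klAux, localKL_eq_klAux]
  have := h1 ▸ h2
  rw [h3] at this
  linarith
end
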